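/- There exists a poset L with uncountably many non-trivial ideals such that the Scott topology on L × L coincides with the product of the Scott topologies. Concretely, L = ℝ × ℕ ordered by (r,m) ≤ (s,n) iff r = s and m ≤ n has this property: L is a continuous poset, σ(L × L) = σ(L) × σ(L), but Id(L) is uncountable. -/

import Mathlib

open Topology


/-- An ideal of a poset: a nonempty, directed lower set.  It is *non-trivial*
if it contains no maximum element. -/
def NontrivialIdeal {P : Type*} [Preorder P] (I : Set P) : Prop :=
  I.Nonempty ∧ DirectedOn (· ≤ ·) I ∧ IsLowerSet I ∧ ¬ ∃ m ∈ I, ∀ x ∈ I, x ≤ m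

/-- The way-below relation: `a` is way below `b` if every directed set whose supremum
dominates `b` contains an element above `a`. -/
def WayBelow {P : Type*} [Preorder P] (a b : P) : Prop :=
  ∀ d : Set P, d.Nonempty → DirectedOn (· ≤ ·) d → ∀ s : P, IsLUB d s → b ≤ s → ∃ c ∈ d, a ≤ c

/-- A poset is continuous if every element is the supremum of the (nonempty, directed) set
of elements way below it. -/
def ContinuousPoset (P : Type*) [Preorder P] : Prop :=
  ∀ x : P, {a | WayBelow a x}.Nonempty ∧ DirectedOn (· ≤ ·) {a | WayBelow a x} ∧
    IsLUB {a | WayBelow a x} x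

/-- The poset `ℝ × ℕ` ordered by `(r,m) ≤ (s,n) ↔ r = s ∧ m ≤ n`. -/
structure RL where
  r : ℝ
  n : ℕ

instance : PartialOrder RL where
  le x y := x.r = y.r ∧ x.n ≤ y.n
  le_refl x := ⟨rfl, le_refl _⟩
  le_trans x y z h₁ h₂ := ⟨h₁.1.trans h₂.1, h₁.2.trans h₂.2⟩
  le_antisymm x y h₁ h₂ := by
    cases x; cases y
    simp only [RL.mk.injEq]
    exact ⟨h₁.1, le_antisymm h₁.2 h₂.2⟩

lemma RL.le_def {x y : RL} : x ≤ y ↔ x.r = y.r ∧ x.n ≤ y.n := Iff.rfl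

/-- In `RL`, every directed set with a least upper bound contains it. -/
lemma RL.mem_of_isLUB {d : Set RL} (hne : d.Nonempty) (hdir : DirectedOn (· ≤ ·) d)
    {a : RL} (ha : IsLUB d a) : a ∈ d := by
  obtain ⟨x₀, hx₀⟩ := hne
  -- all elements of d share the same real coordinate
  have hsame : ∀ x ∈ d, x.r = x₀.r := by
    intro x hx
    obtain ⟨z, _, hxz, hx₀z⟩ := hdir x hx x₀ hx₀
    exact hxz.1.trans hx₀z.1.symm
  set N : Set ℕ := RL.n '' d with hN
  have hNne : N.Nonempty := ⟨x₀.n, x₀, hx₀, rfl⟩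
  have hNbdd : BddAbove N := ⟨a.n, by rintro m ⟨x, hx, rfl⟩; exact (ha.1 hx).2⟩
  obtain ⟨e, he, hen⟩ := Nat.sSup_mem hNne hNbdd
  have hub : e ∈ upperBounds d := by
    intro x hx
    exact ⟨(hsame x hx).trans (hsame e he).symm,
      hen ▸ le_csSup hNbdd ⟨x, hx, rfl⟩⟩
  have : a = e := le_antisymm (ha.2 hub) (ha.1 he)
  exact this ▸ he

/-- In `RL × RL`, every directed set with a least upper bound contains it. -/
lemma RL.prod_mem_of_isLUB {d : Set (RL × RL)} (hne : d.Nonempty)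
    (hdir : DirectedOn (· ≤ ·) d) {s : RL × RL} (hs : IsLUB d s) : s ∈ d := by
  have h1 : IsLUB (Prod.fst '' d) s.1 := by
    constructor
    · rintro x ⟨p, hp, rfl⟩; exact (hs.1 hp).1
    · intro u hu
      have : s ≤ (u, s.2) := hs.2 (fun p hp => ⟨hu ⟨p, hp, rfl⟩, (hs.1 hp).2⟩)
      exact this.1
  have h2 : IsLUB (Prod.snd '' d) s.2 := by
    constructor
    · rintro x ⟨p, hp, rfl⟩; exact (hs.1 hp).2
    · intro u hu
      have : s ≤ (s.1, u) := hs.2 (fun p hp => ⟨(hs.1 hp).1, hu ⟨p, hp, rfl⟩⟩)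
      exact this.2
  have hdir1 : DirectedOn (· ≤ ·) (Prod.fst '' d) := by
    rintro _ ⟨x, hx, rfl⟩ _ ⟨y, hy, rfl⟩
    obtain ⟨z, hz, hxz, hyz⟩ := hdir x hx y hy
    exact ⟨z.1, ⟨z, hz, rfl⟩, hxz.1, hyz.1⟩
  have hdir2 : DirectedOn (· ≤ ·) (Prod.snd '' d) := by
    rintro _ ⟨x, hx, rfl⟩ _ ⟨y, hy, rfl⟩
    obtain ⟨z, hz, hxz, hyz⟩ := hdir x hx y hy
    exact ⟨z.2, ⟨z, hz, rfl⟩, hxz.2, hyz.2⟩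
  obtain ⟨a, hain, ha⟩ := RL.mem_of_isLUB (hne.image _) hdir1 h1
  obtain ⟨b, hbin, hb⟩ := RL.mem_of_isLUB (hne.image _) hdir2 h2
  obtain ⟨c, hc, hac, hbc⟩ := hdir a hain b hbin
  have hcs : c ≤ s := hs.1 hc
  have h1' : c.1 = s.1 := le_antisymm hcs.1 (ha ▸ hac.1)
  have h2' : c.2 = s.2 := le_antisymm hcs.2 (hb ▸ hbc.2)
  have : c = s := Prod.ext h1' h2'
  exact this ▸ hc

/-- In `RL`, way-below coincides with `≤`. -/
lemma RL.wayBelow_iff_le {a x : RL} : WayBelow a x ↔ a ≤ x := by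
  constructor
  · intro h
    obtain ⟨c, hc, hac⟩ := h {x} ⟨x, rfl⟩ (directedOn_singleton x) x isLUB_singleton
      le_rfl
    rw [Set.mem_singleton_iff] at hc
    exact hc ▸ hac
  · intro hax d hne hdir s hlub hxs
    exact ⟨s, RL.mem_of_isLUB hne hdir hlub, hax.trans hxs⟩

/-- There is a poset with uncountably many non-trivial ideals on which the Scott topology of
the square coincides with the product of the Scott topologies: namely `L = ℝ × ℕ` with
`(r,m) ≤ (s,n) ↔ r = s ∧ m ≤ n` is a continuous poset, `σ(L × L) = σ(L) × σ(L)`, and yet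
the set of non-trivial ideals of `L` is uncountable. -/
theorem continuous_poset_uncountable_ideals_scott_prod :
    ContinuousPoset RL ∧
    Topology.scott (RL × RL) Set.univ =
      @instTopologicalSpaceProd RL RL (Topology.scott RL Set.univ) (Topology.scott RL Set.univ) ∧
    ¬ {I : Set RL | NontrivialIdeal I}.Countable := by
  refine ⟨?_, ?_, ?_⟩
  · -- continuity
    intro x
    have hset : {a | WayBelow a x} = Set.Iic x := by
      ext a; exact RL.wayBelow_iff_le
    rw [hset]
    exact ⟨⟨x, Set.self_mem_Iic⟩, fun a ha b hb => ⟨x, Set.self_mem_Iic, ha, hb⟩,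
      fun a ha => ha, fun u hu => hu Set.self_mem_Iic⟩
  · -- topologies agree: both are the upper set topology
    letI tRL : TopologicalSpace RL := Topology.scott RL Set.univ
    have hRL : ∀ s : Set RL, IsOpen[Topology.scott RL Set.univ] s ↔ IsUpperSet s := by
      haveI iRL : Topology.IsScott RL Set.univ := ⟨rfl⟩
      intro s
      rw [show IsOpen[Topology.scott RL Set.univ] s ↔ IsOpen s from Iff.rfl,
        Topology.IsScott.isOpen_iff_isUpperSet_and_dirSupInaccOn (D := Set.univ)]
      refine ⟨And.left, fun h => ⟨h, ?_⟩⟩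
      intro d _ hne hdir a ha has
      exact ⟨a, RL.mem_of_isLUB hne hdir ha, has⟩
    have hP : ∀ s : Set (RL × RL),
        IsOpen[Topology.scott (RL × RL) Set.univ] s ↔ IsUpperSet s := by
      letI tP : TopologicalSpace (RL × RL) := Topology.scott (RL × RL) Set.univ
      haveI iP : Topology.IsScott (RL × RL) Set.univ := ⟨rfl⟩
      intro s
      rw [show IsOpen[Topology.scott (RL × RL) Set.univ] s ↔ IsOpen s from Iff.rfl,
        Topology.IsScott.isOpen_iff_isUpperSet_and_dirSupInaccOn (D := Set.univ)]
      refine ⟨And.left, fun h => ⟨h, ?_⟩⟩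
      intro d _ hne hdir a ha has
      exact ⟨a, RL.prod_mem_of_isLUB hne hdir ha, has⟩
    rw [TopologicalSpace.ext_iff]
    intro s
    rw [hP s]
    constructor
    · -- every upper set is open in the product topology
      intro hs
      have heq : s = ⋃ p ∈ s, (Set.Ici p.1 ×ˢ Set.Ici p.2) := by
        ext q
        simp only [Set.mem_iUnion, Set.mem_prod, Set.mem_Ici]
        exact ⟨fun hq => ⟨q, hq, le_rfl, le_rfl⟩,
          fun ⟨p, hp, h1, h2⟩ => hs (Prod.mk_le_mk.mpr ⟨h1, h2⟩) hp⟩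
      rw [heq]
      exact isOpen_biUnion fun p _ =>
        IsOpen.prod ((hRL _).mpr (isUpperSet_Ici _)) ((hRL _).mpr (isUpperSet_Ici _))
    · -- every product-open set is upper
      intro hs p q hpq hp
      obtain ⟨u, v, hu, hv, hpu, hpv, huv⟩ := isOpen_prod_iff.mp hs p.1 p.2 hp
      exact huv ⟨(hRL u).mp hu hpq.1 hpu, (hRL v).mp hv hpq.2 hpv⟩
  · -- uncountably many nontrivial ideals
    intro hc
    set f : ℝ → Set RL := fun r => {p | p.r = r} with hf
    have hmem : ∀ r, f r ∈ {I : Set RL | NontrivialIdeal I} := by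
      intro r
      refine ⟨⟨⟨r, 0⟩, rfl⟩, ?_, ?_, ?_⟩
      · intro x hx y hy
        exact ⟨⟨r, max x.n y.n⟩, rfl, ⟨hx, le_max_left _ _⟩, ⟨hy, le_max_right _ _⟩⟩
      · intro x y hyx hx
        exact hyx.1.trans hx
      · rintro ⟨m, hm, hmax⟩
        have := hmax ⟨r, m.n + 1⟩ rfl
        exact Nat.not_succ_le_self m.n this.2
    have hinj : Function.Injective f := by
      intro r r' h
      have : (⟨r, 0⟩ : RL) ∈ f r' := h ▸ rfl
      exact this
    have hcr : (Set.range f).Countable := hc.mono (Set.range_subset_iff.mpr hmem)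
    haveI : Countable (Set.range f) := hcr.to_subtype
    haveI : Countable ℝ := Countable.of_equiv _ (Equiv.ofInjective f hinj).symm
    exact not_countable (α := ℝ) this
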